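/- Let n ≥ 1, d = 2^n, and 0 ≤ Q ≤ 1. Define the environment state |Ω⟩ = (d^{−1/2} Σ_{i∈{0,1}^n} |i⟩⊗|i⟩) ⊗ (√(1−Q)|0⟩ + √Q|1⟩) ∈ ℂ^d ⊗ ℂ^d ⊗ ℂ², and the controlled-swap unitary U on ℂ^d_T ⊗ ℂ^d_{E₁} ⊗ ℂ^d_{E₂} ⊗ ℂ²_{E₃} acting by U(|t⟩⊗|i⟩⊗|j⟩⊗|0⟩) = |t⟩⊗|i⟩⊗|j⟩⊗|0⟩ and U(|t⟩⊗|i⟩⊗|j⟩⊗|1⟩) = |i⟩⊗|t⟩⊗|j⟩⊗|1⟩ on standard basis vectors. Then for every d×d complex matrix ρ on the T factor, the partial trace over the environment factors E₁E₂E₃ of U(ρ ⊗ |Ω⟩⟨Ω|)U† equals the depolarized state (1−Q)ρ + (Q/d)(tr ρ) I_d. -/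

import Mathlib

open scoped BigOperators

/-- Environment index: `E₁ × E₂ × E₃ = ℂ^{2^n} ⊗ ℂ^{2^n} ⊗ ℂ²`. -/
abbrev EnvIdx (n : ℕ) := (Fin n → Bool) × (Fin n → Bool) × Bool

instance envIdxDecEq (n : ℕ) : DecidableEq (EnvIdx n) := instDecidableEqProd

instance fullIdxDecEq (n : ℕ) : DecidableEq ((Fin n → Bool) × EnvIdx n) :=
  instDecidableEqProd

/-- The environment state
`|Ω⟩ = (d^{−1/2} Σ_i |i⟩⊗|i⟩) ⊗ (√(1−Q)|0⟩ + √Q|1⟩)`, `d = 2^n`, as a coordinate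
function on `ℂ^d ⊗ ℂ^d ⊗ ℂ²`. -/
noncomputable def envState (n : ℕ) (Q : ℝ) : EnvIdx n → ℂ :=
  fun e => (if e.1 = e.2.1 then ((Real.sqrt (2 ^ n) : ℝ) : ℂ)⁻¹ else 0) *
    (if e.2.2 then ((Real.sqrt Q : ℝ) : ℂ) else ((Real.sqrt (1 - Q) : ℝ) : ℂ))

/-- The controlled-swap unitary `U` on `ℂ^d_T ⊗ ℂ^d_{E₁} ⊗ ℂ^d_{E₂} ⊗ ℂ²_{E₃}`:
`U(|t⟩|i⟩|j⟩|0⟩) = |t⟩|i⟩|j⟩|0⟩` and `U(|t⟩|i⟩|j⟩|1⟩) = |i⟩|t⟩|j⟩|1⟩`. -/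
def cswapU (n : ℕ) :
    Matrix ((Fin n → Bool) × EnvIdx n) ((Fin n → Bool) × EnvIdx n) ℂ :=
  Matrix.of fun p q =>
    if p.2.2.2 = q.2.2.2 ∧ p.2.2.1 = q.2.2.1 ∧
        ((q.2.2.2 = false ∧ p.1 = q.1 ∧ p.2.1 = q.2.1) ∨
         (q.2.2.2 = true ∧ p.1 = q.2.1 ∧ p.2.1 = q.1))
    then 1 else 0

/-- `ρ ⊗ |Ω⟩⟨Ω|` on the product space `T × E₁E₂E₃`. -/
noncomputable def rhoTensorOmega (n : ℕ) (Q : ℝ)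
    (ρ : Matrix (Fin n → Bool) (Fin n → Bool) ℂ) :
    Matrix ((Fin n → Bool) × EnvIdx n) ((Fin n → Bool) × EnvIdx n) ℂ :=
  Matrix.of fun p q => ρ p.1 q.1 * (envState n Q p.2 * star (envState n Q q.2))

/-- Partial trace over the environment factors. -/
noncomputable def ptraceEnv (n : ℕ)
    (M : Matrix ((Fin n → Bool) × EnvIdx n) ((Fin n → Bool) × EnvIdx n) ℂ) :
    Matrix (Fin n → Bool) (Fin n → Bool) ℂ :=
  Matrix.of fun t t' => ∑ e : EnvIdx n, M (t, e) (t', e)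


def sigmaFn (n : ℕ) : ((Fin n → Bool) × EnvIdx n) → ((Fin n → Bool) × EnvIdx n) :=
  fun p => if p.2.2.2 then (p.2.1, (p.1, p.2.2.1, true)) else p

lemma cswapU_apply (n : ℕ) (p q : (Fin n → Bool) × EnvIdx n) :
    cswapU n p q = if q = sigmaFn n p then 1 else 0 := by
  obtain ⟨t, i, j, b⟩ := p
  obtain ⟨t', i', j', b'⟩ := q
  cases b <;> cases b' <;>
    simp only [cswapU, sigmaFn, Matrix.of_apply, Prod.mk.injEq, Bool.false_eq_true,
      Bool.true_eq_false, if_true, if_false, ite_true, ite_false] <;>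
    split_ifs <;>
    simp_all only [Bool.false_eq_true, Bool.true_eq_false, and_false, false_and, or_false,
      false_or, and_true, true_and, not_and, not_or, Prod.mk.injEq, not_true, not_false_iff,
      and_self, imp_false] <;>
    tauto

lemma sigmaFn_invol (n : ℕ) (p : (Fin n → Bool) × EnvIdx n) :
    sigmaFn n (sigmaFn n p) = p := by
  obtain ⟨t, i, j, b⟩ := p
  cases b <;> simp [sigmaFn]

lemma sandwich (n : ℕ)
    (M : Matrix ((Fin n → Bool) × EnvIdx n) ((Fin n → Bool) × EnvIdx n) ℂ)
    (p q : (Fin n → Bool) × EnvIdx n) :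
    (cswapU n * M * (cswapU n).conjTranspose) p q = M (sigmaFn n p) (sigmaFn n q) := by
  rw [Matrix.mul_assoc]
  rw [Matrix.mul_apply]
  have h1 : ∀ r, (M * (cswapU n).conjTranspose) r q = M r (sigmaFn n q) := by
    intro r
    rw [Matrix.mul_apply]
    simp [Matrix.conjTranspose_apply, cswapU_apply, apply_ite (star : ℂ → ℂ),
      mul_ite, Finset.sum_ite_eq']
  simp only [h1, cswapU_apply, ite_mul, one_mul, zero_mul, Finset.sum_ite_eq']
  simp

/-- Stinespring dilation of the depolarizing channel: tracing out the environment
from `U(ρ ⊗ |Ω⟩⟨Ω|)U†` yields `(1−Q)ρ + (Q/d)(tr ρ) I_d`, `d = 2^n`. -/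
theorem depol_dilation (n : ℕ) (hn : 1 ≤ n) (Q : ℝ) (hQ0 : 0 ≤ Q) (hQ1 : Q ≤ 1)
    (ρ : Matrix (Fin n → Bool) (Fin n → Bool) ℂ) :
    ptraceEnv n (cswapU n * rhoTensorOmega n Q ρ * (cswapU n).conjTranspose) =
      ((1 - Q : ℝ) : ℂ) • ρ +
        ((Q / 2 ^ n : ℝ) : ℂ) • ρ.trace • (1 : Matrix (Fin n → Bool) (Fin n → Bool) ℂ) := by
  ext t t'
  simp only [ptraceEnv, Matrix.of_apply, sandwich]
  rw [Fintype.sum_prod_type]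
  simp only [Fintype.sum_prod_type, Fintype.sum_bool]
  simp only [rhoTensorOmega, sigmaFn, envState, Matrix.of_apply, ite_true, ite_false,
    if_true, if_false]
  simp only [Bool.false_eq_true, if_false, ite_false, if_true, ite_true]
  simp only [Complex.star_def, map_mul, apply_ite (starRingEnd ℂ), map_inv₀, map_zero,
    Complex.conj_ofReal]
  simp only [mul_ite, ite_mul, mul_zero, zero_mul, mul_one, one_mul, ite_self,
    if_pos rfl]
  simp only [Finset.sum_add_distrib, Finset.sum_ite_eq, Finset.sum_ite_eq',
    Finset.mem_univ, if_true]
  have e2 : Real.sqrt (2 ^ n) * Real.sqrt (2 ^ n) = 2 ^ n :=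
    Real.mul_self_sqrt (by positivity)
  have eQ : Real.sqrt Q * Real.sqrt Q = Q := Real.mul_self_sqrt hQ0
  have e1Q : Real.sqrt (1 - Q) * Real.sqrt (1 - Q) = 1 - Q :=
    Real.mul_self_sqrt (by linarith)
  have r1 : (Real.sqrt (2 ^ n))⁻¹ * Real.sqrt Q * ((Real.sqrt (2 ^ n))⁻¹ * Real.sqrt Q)
      = Q / 2 ^ n := by
    rw [show (Real.sqrt (2 ^ n))⁻¹ * Real.sqrt Q * ((Real.sqrt (2 ^ n))⁻¹ * Real.sqrt Q)
        = (Real.sqrt Q * Real.sqrt Q) * (Real.sqrt (2 ^ n) * Real.sqrt (2 ^ n))⁻¹ by ring,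
      eQ, e2, div_eq_mul_inv]
  have r2 : (Real.sqrt (2 ^ n))⁻¹ * Real.sqrt (1 - Q) *
      ((Real.sqrt (2 ^ n))⁻¹ * Real.sqrt (1 - Q)) = (1 - Q) / 2 ^ n := by
    rw [show (Real.sqrt (2 ^ n))⁻¹ * Real.sqrt (1 - Q) *
        ((Real.sqrt (2 ^ n))⁻¹ * Real.sqrt (1 - Q))
        = (Real.sqrt (1 - Q) * Real.sqrt (1 - Q)) *
          (Real.sqrt (2 ^ n) * Real.sqrt (2 ^ n))⁻¹ by ring,
      e1Q, e2, div_eq_mul_inv]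
  have c1 : ((Real.sqrt (2 ^ n) : ℝ) : ℂ)⁻¹ * ((Real.sqrt Q : ℝ) : ℂ) *
      (((Real.sqrt (2 ^ n) : ℝ) : ℂ)⁻¹ * ((Real.sqrt Q : ℝ) : ℂ)) = ((Q / 2 ^ n : ℝ) : ℂ) := by
    exact_mod_cast congrArg (Complex.ofReal) r1
  have c2 : ((Real.sqrt (2 ^ n) : ℝ) : ℂ)⁻¹ * ((Real.sqrt (1 - Q) : ℝ) : ℂ) *
      (((Real.sqrt (2 ^ n) : ℝ) : ℂ)⁻¹ * ((Real.sqrt (1 - Q) : ℝ) : ℂ))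
      = (((1 - Q) / 2 ^ n : ℝ) : ℂ) := by
    exact_mod_cast congrArg (Complex.ofReal) r2
  simp only [c1, c2]
  have hpow : ((2 : ℂ) ^ n) ≠ 0 := pow_ne_zero _ two_ne_zero
  by_cases h : t = t'
  · subst h
    simp only [Matrix.add_apply, Matrix.smul_apply, Matrix.one_apply_eq, smul_eq_mul,
      Matrix.trace, Matrix.diag, if_pos rfl, eq_self_iff_true, if_true, ite_true,
      Finset.sum_const, Finset.card_univ,
      Fintype.card_fun, Fintype.card_bool, Fintype.card_fin, nsmul_eq_mul,
      mul_one]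
    rw [← Finset.sum_mul]
    set S := ∑ x : Fin n → Bool, ρ x x with hS
    push_cast
    field_simp
    ring
  · simp only [Matrix.add_apply, Matrix.smul_apply, Matrix.one_apply_ne h, smul_eq_mul,
      if_neg h, Finset.sum_const_zero, Finset.sum_const, Finset.card_univ,
      Fintype.card_fun, Fintype.card_bool, Fintype.card_fin, nsmul_eq_mul, mul_zero, add_zero,
      zero_add]
    push_cast
    field_simp
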